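/- Let X, Y ∈ SL(2,ℂ), let ξ, χ ∈ ℂ² be unit spinors, let λ > 0 and θ ∈ ℝ, and suppose the two critical point equations hold: (Xᴴ)⁻¹ ξ = λ e^{iθ} (Yᴴ)⁻¹ (Jχ) and X ξ = λ⁻¹ e^{iθ} Y (Jχ). Then ξ is an eigenvector of the Hermitian matrix X⁻¹ Y Yᴴ (Xᴴ)⁻¹ with eigenvalue λ²: X⁻¹ Y Yᴴ (Xᴴ)⁻¹ ξ = λ² ξ. Consequently tr((X Xᴴ)⁻¹ (Y Yᴴ)) = λ² + λ⁻². -/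

import Mathlib

open Matrix

noncomputable section

/-- Pauli matrix σ₁. -/
def σ1 : Matrix (Fin 2) (Fin 2) ℂ := !![0, 1; 1, 0]
/-- Pauli matrix σ₂. -/
def σ2 : Matrix (Fin 2) (Fin 2) ℂ := !![0, -Complex.I; Complex.I, 0]
/-- Pauli matrix σ₃. -/
def σ3 : Matrix (Fin 2) (Fin 2) ℂ := !![1, 0; 0, -1]

/-- The triple of Pauli matrices. -/
def pauli : Fin 3 → Matrix (Fin 2) (Fin 2) ℂ := ![σ1, σ2, σ3]

/-- σ·a = a₁σ₁ + a₂σ₂ + a₃σ₃ for a ∈ ℝ³. -/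
def sigmaDot (a : Fin 3 → ℝ) : Matrix (Fin 2) (Fin 2) ℂ := ∑ i, (a i : ℂ) • pauli i

/-- The Hermitian inner product ⟨z,w⟩ = z̄₀w₀ + z̄₁w₁ on ℂ², conjugate-linear in the
first argument. -/
def herm (z w : Fin 2 → ℂ) : ℂ := star (z 0) * w 0 + star (z 1) * w 1

/-- The antilinear map J(z₀,z₁) = (−z̄₁, z̄₀) on ℂ². -/
def Jmap (z : Fin 2 → ℂ) : Fin 2 → ℂ := ![-(star (z 1)), star (z 0)]

/-- The matrix ε = [[0,−1],[1,0]]. -/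
def eps : Matrix (Fin 2) (Fin 2) ℂ := !![0, -1; 1, 0]

lemma ch2 (M : Matrix (Fin 2) (Fin 2) ℂ) :
    M * M - M.trace • M + M.det • (1 : Matrix (Fin 2) (Fin 2) ℂ) = 0 := by
  ext i j
  fin_cases i <;> fin_cases j <;>
    simp [Matrix.mul_apply, Matrix.trace, Matrix.det_fin_two, Fin.sum_univ_two,
      Matrix.one_apply] <;> ring

/-- The two critical point equations imply ξ is a λ²-eigenvector of the Hermitian
matrix X⁻¹YYᴴ(Xᴴ)⁻¹, and tr((XXᴴ)⁻¹(YYᴴ)) = λ² + λ⁻². -/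
theorem stmt16 (X Y : Matrix (Fin 2) (Fin 2) ℂ) (hX : X.det = 1) (hY : Y.det = 1)
    (ξ χ : Fin 2 → ℂ) (hξ : herm ξ ξ = 1) (hχ : herm χ χ = 1)
    (lam θ : ℝ) (hlam : 0 < lam)
    (h1 : (Xᴴ)⁻¹.mulVec ξ
      = ((lam : ℂ) * Complex.exp (Complex.I * θ)) • (Yᴴ)⁻¹.mulVec (Jmap χ))
    (h2 : X.mulVec ξ
      = ((lam : ℂ)⁻¹ * Complex.exp (Complex.I * θ)) • Y.mulVec (Jmap χ)) :
    (X⁻¹ * Y * Yᴴ * (Xᴴ)⁻¹).mulVec ξ = ((lam : ℂ) ^ 2) • ξ ∧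
    ((X * Xᴴ)⁻¹ * (Y * Yᴴ)).trace = ((lam ^ 2 + lam⁻¹ ^ 2 : ℝ) : ℂ) := by
  have hXu : IsUnit X.det := by simp [hX]
  have hYu : IsUnit Y.det := by simp [hY]
  have hXHu : IsUnit Xᴴ.det := by simp [Matrix.det_conjTranspose, hX]
  have hYHu : IsUnit Yᴴ.det := by simp [Matrix.det_conjTranspose, hY]
  have hlamC : (lam : ℂ) ≠ 0 := by exact_mod_cast hlam.ne'
  have hexp : Complex.exp (Complex.I * θ) ≠ 0 := Complex.exp_ne_zero _
  -- eigenvector statement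
  have key : (X⁻¹ * Y * Yᴴ * (Xᴴ)⁻¹).mulVec ξ = ((lam : ℂ) ^ 2) • ξ := by
    have e1 : Yᴴ.mulVec ((Xᴴ)⁻¹.mulVec ξ)
        = ((lam : ℂ) * Complex.exp (Complex.I * θ)) • Jmap χ := by
      rw [h1, Matrix.mulVec_smul, Matrix.mulVec_mulVec, Matrix.mul_nonsing_inv _ hYHu,
        Matrix.one_mulVec]
    have e2 : Y.mulVec (Jmap χ) = ((lam : ℂ) * (Complex.exp (Complex.I * θ))⁻¹) • X.mulVec ξ := by
      rw [h2, smul_smul]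
      rw [show ((lam : ℂ) * (Complex.exp (Complex.I * θ))⁻¹) *
        ((lam : ℂ)⁻¹ * Complex.exp (Complex.I * θ)) = 1 by field_simp, one_smul]
    have : (X⁻¹ * Y * Yᴴ * (Xᴴ)⁻¹).mulVec ξ
        = X⁻¹.mulVec (Y.mulVec (Yᴴ.mulVec ((Xᴴ)⁻¹.mulVec ξ))) := by
      rw [Matrix.mulVec_mulVec, Matrix.mulVec_mulVec, Matrix.mulVec_mulVec]
    rw [this, e1, Matrix.mulVec_smul, e2, smul_smul, Matrix.mulVec_smul,
      Matrix.mulVec_mulVec, Matrix.nonsing_inv_mul _ hXu, Matrix.one_mulVec]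
    congr 1
    field_simp
  refine ⟨key, ?_⟩
  set M := X⁻¹ * Y * Yᴴ * (Xᴴ)⁻¹ with hM
  have hdet : M.det = 1 := by
    simp [hM, Matrix.det_mul, Matrix.det_nonsing_inv, Matrix.det_conjTranspose, hX, hY]
  have htr : ((X * Xᴴ)⁻¹ * (Y * Yᴴ)).trace = M.trace := by
    rw [Matrix.mul_inv_rev, Matrix.mul_assoc, Matrix.trace_mul_comm, hM]
    simp [Matrix.mul_assoc]
  rw [htr]
  -- ξ ≠ 0 at some index
  have hne : ξ 0 ≠ 0 ∨ ξ 1 ≠ 0 := by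
    by_contra h
    push_neg at h
    simp [herm, h.1, h.2] at hξ
  obtain ⟨i, hi⟩ : ∃ i, ξ i ≠ 0 := hne.elim (⟨0, ·⟩) (⟨1, ·⟩)
  -- Cayley-Hamilton applied to ξ
  have hCH := congrArg (fun A => A.mulVec ξ) (ch2 M)
  simp only [Matrix.add_mulVec, Matrix.sub_mulVec, Matrix.smul_mulVec,
    Matrix.one_mulVec, Matrix.zero_mulVec, hdet, one_smul] at hCH
  have hM2 : (M * M).mulVec ξ = ((lam : ℂ) ^ 4) • ξ := by
    rw [← Matrix.mulVec_mulVec, key, Matrix.mulVec_smul, key, smul_smul]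
    congr 1
    ring
  rw [hM2, key, smul_smul] at hCH
  have := congrFun hCH i
  simp only [Pi.add_apply, Pi.sub_apply, Pi.smul_apply, Pi.zero_apply, smul_eq_mul] at this
  have hscal : (lam : ℂ) ^ 4 - M.trace * (lam : ℂ) ^ 2 + 1 = 0 := by
    have h' : ((lam : ℂ) ^ 4 - M.trace * (lam : ℂ) ^ 2 + 1) * ξ i = 0 := by
      linear_combination this
    rcases mul_eq_zero.mp h' with h | h
    · exact h
    · exact absurd h hi
  have : M.trace = (lam : ℂ) ^ 2 + ((lam : ℂ)⁻¹) ^ 2 := by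
    field_simp at hscal ⊢
    linear_combination -hscal
  rw [this]
  push_cast
  ring
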